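/- arXiv:0710.3115 — 3 statements merged into one kernel-verified Lean document; each statement's English description precedes it below -/
import Mathlib

section
/- Let λ(q) be a monic complex polynomial of degree n+1 (n ≥ 1) whose derivative λ′ has n pairwise distinct roots r_1, …, r_n (so each critical point is simple, λ″(r_k) ≠ 0). Then for every index i, the sum over k ≠ i of (λ(r_k) − λ(r_i)) / (λ″(r_k)·(r_k − r_i)²) equals (1 − n)/(2(n + 1)). -/
open Polynomial
open Finset

lemma coeff_interpolate' {F : Type*} [Field F] {ι : Type*} [DecidableEq ι]
    {s : Finset ι} {v : ι → F} (f : ι → F) :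
    (Lagrange.interpolate s v f).coeff (#s - 1) =
      ∑ i ∈ s, f i * Lagrange.nodalWeight s v i := by
  rw [Lagrange.interpolate_apply, finset_sum_coeff]
  refine Finset.sum_congr rfl fun i hi => ?_
  rw [Lagrange.basis_eq_prod_sub_inv_mul_nodal_div hi, ← Lagrange.nodal_erase_eq_nodal_div hi,
    ← mul_assoc, ← C_mul, coeff_C_mul]
  have hcard : (s.erase i).card = #s - 1 := Finset.card_erase_of_mem hi
  have h1 : (Lagrange.nodal (s.erase i) v).coeff (#s - 1) = 1 := by
    rw [← hcard]
    have := Lagrange.nodal_monic (s := s.erase i) (v := v)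
    simpa [Lagrange.natDegree_nodal] using this.coeff_natDegree
  rw [h1, mul_one]

lemma coeff_eq_sum_eval' {F : Type*} [Field F] {ι : Type*} [DecidableEq ι]
    {s : Finset ι} {v : ι → F} (hvs : Set.InjOn v s) {g : F[X]}
    (hg : g.degree < #s) :
    g.coeff (#s - 1) = ∑ i ∈ s, g.eval (v i) * Lagrange.nodalWeight s v i := by
  rw [Lagrange.eq_interpolate hvs hg, coeff_interpolate']
  refine Finset.sum_congr rfl fun i hi => ?_
  rw [Lagrange.eval_interpolate_at_node _ hvs hi]

/-- For a monic polynomial `λ` of degree `n+1` with `n` pairwise distinct simple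
critical points `r 1, …, r n`, the sum over `k ≠ i` of
`(λ(r k) − λ(r i)) / (λ''(r k)·(r k − r i)²)` equals `(1 − n)/(2(n+1))`. -/
theorem an_central_invariant_sum (n : ℕ) (hn : 1 ≤ n) (lam : Polynomial ℂ)
    (hmonic : lam.Monic) (hdeg : lam.natDegree = n + 1)
    (r : Fin n → ℂ) (hinj : Function.Injective r)
    (hroot : ∀ k, (derivative lam).eval (r k) = 0)
    (hsimple : ∀ k, (derivative (derivative lam)).eval (r k) ≠ 0)
    (i : Fin n) :
    ∑ k ∈ Finset.univ.erase i,
        (lam.eval (r k) - lam.eval (r i)) /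
          ((derivative (derivative lam)).eval (r k) * (r k - r i) ^ 2)
      = (1 - (n : ℂ)) / (2 * ((n : ℂ) + 1)) := by
  classical
  have hC : Set.InjOn r (Finset.univ : Finset (Fin n)) := hinj.injOn
  have hn1 : ((n : ℂ) + 1) ≠ 0 := by exact_mod_cast (Nat.cast_add_one_ne_zero n (R := ℂ))
  set a := r i with ha
  set N := Lagrange.nodal (Finset.univ : Finset (Fin n)) r with hN
  have hcard : #(Finset.univ : Finset (Fin n)) = n := by simp
  have hNdeg : N.natDegree = n := by rw [hN, Lagrange.natDegree_nodal, hcard]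
  have hNmonic : N.Monic := Lagrange.nodal_monic
  -- derivative lam = C (n+1) * N
  have hld : derivative lam = C ((n : ℂ) + 1) * N := by
    have hz : derivative lam - C ((n : ℂ) + 1) * N = 0 := by
      apply eq_zero_of_degree_lt_of_eval_index_eq_zero (v := r) Finset.univ hC
      · rw [hcard, Polynomial.degree_lt_iff_coeff_zero]
        intro m hm
        have hm' : n ≤ m := by exact_mod_cast hm
        rw [coeff_sub, coeff_derivative, coeff_C_mul]
        rcases eq_or_lt_of_le hm' with h | h
        · have h1 : lam.coeff (m + 1) = 1 := by
            have := hmonic.coeff_natDegree; rwa [hdeg, h] at this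
          have h2 : N.coeff m = 1 := by
            have := hNmonic.coeff_natDegree; rwa [hNdeg, h] at this
          rw [h1, h2, h]; push_cast; ring
        · have h1 : lam.coeff (m + 1) = 0 :=
            coeff_eq_zero_of_natDegree_lt (by omega)
          have h2 : N.coeff m = 0 :=
            coeff_eq_zero_of_natDegree_lt (by omega)
          rw [h1, h2]; ring
      · intro k _
        simp [hroot k, hN, Lagrange.eval_nodal_at_node]
    exact sub_eq_zero.mp hz
  -- second derivative at nodes
  have hdd : ∀ k : Fin n, (derivative (derivative lam)).eval (r k)
      = ((n : ℂ) + 1) * ∏ j ∈ Finset.univ.erase k, (r k - r j) := by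
    intro k
    rw [hld, derivative_C_mul, eval_mul, eval_C,
      Lagrange.eval_nodal_derivative_eval_node_eq (Finset.mem_univ k), Lagrange.eval_nodal]
  -- products are nonzero
  have hprod_ne : ∀ k : Fin n, (∏ j ∈ Finset.univ.erase k, (r k - r j)) ≠ 0 := by
    intro k
    rw [Finset.prod_ne_zero_iff]
    intro j hj
    exact sub_ne_zero_of_ne fun h => (Finset.mem_erase.mp hj).1 (hinj h.symm)
  -- nodal weight
  have hW : ∀ k : Fin n, Lagrange.nodalWeight Finset.univ r k
      = (∏ j ∈ Finset.univ.erase k, (r k - r j))⁻¹ := by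
    intro k
    rw [Lagrange.nodalWeight_eq_eval_nodal_erase_inv, Lagrange.eval_nodal]
  -- factorization lam - C (lam.eval a) = (X - C a)^2 * g
  set p : ℂ[X] := lam - C (lam.eval a) with hp
  have hpa : p.IsRoot a := by simp [hp]
  obtain ⟨q, hq⟩ := dvd_iff_isRoot.mpr hpa
  have hqa : q.IsRoot a := by
    have hdpl : derivative p = derivative lam := by simp [hp]
    have h0 : (derivative p).eval a = 0 := by rw [hdpl]; exact hroot i
    rw [hq, derivative_mul] at h0
    simpa using h0
  obtain ⟨g, hg⟩ := dvd_iff_isRoot.mpr hqa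
  have hpg : p = (X - C a) ^ 2 * g := by rw [hq, hg]; ring
  -- p is monic of natDegree n+1
  have hlamne : lam ≠ 0 := hmonic.ne_zero
  have hdlt : (C (lam.eval a)).degree < lam.degree := by
    refine lt_of_le_of_lt degree_C_le ?_
    rw [degree_eq_natDegree hlamne, hdeg]
    exact_mod_cast Nat.cast_pos.mpr (Nat.succ_pos n)
  have hpm : p.Monic := by
    show p.leadingCoeff = 1
    rw [hp, leadingCoeff_sub_of_degree_lt hdlt]
    exact hmonic
  have hpdeg : p.natDegree = n + 1 := by rw [hp, natDegree_sub_C, hdeg]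
  -- g is monic of natDegree n - 1
  have hxm : ((X - C a) ^ 2 : ℂ[X]).Monic := (monic_X_sub_C a).pow 2
  have hgm : g.Monic := by
    have := hpg ▸ hpm
    exact hxm.of_mul_monic_left this
  have hgdeg : g.natDegree = n - 1 := by
    have h1 : p.natDegree = ((X - C a) ^ 2 : ℂ[X]).natDegree + g.natDegree := by
      rw [hpg]; exact hxm.natDegree_mul hgm
    have h2 : ((X - C a) ^ 2 : ℂ[X]).natDegree = 2 := by
      simp [natDegree_pow]
    omega
  have hgdlt : g.degree < (#(Finset.univ : Finset (Fin n)) : WithBot ℕ) := by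
    rw [hcard, degree_eq_natDegree hgm.ne_zero, hgdeg]
    exact_mod_cast Nat.sub_lt hn Nat.one_pos
  -- key sum identity
  have hsum1 : ∑ k : Fin n, g.eval (r k) * Lagrange.nodalWeight Finset.univ r k = 1 := by
    have := coeff_eq_sum_eval' hC hgdlt
    rw [hcard] at this
    rw [← this]
    have := hgm.coeff_natDegree
    rwa [hgdeg] at this
  -- evaluation of g off a
  have hgk : ∀ k ∈ Finset.univ.erase i,
      lam.eval (r k) - lam.eval a = (r k - a) ^ 2 * g.eval (r k) := by
    intro k _
    have := congrArg (eval (r k)) hpg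
    simpa [hp] using this
  -- evaluation of g at a
  have hga : (derivative (derivative lam)).eval a = 2 * g.eval a := by
    have hdpl : derivative (derivative p) = derivative (derivative lam) := by simp [hp]
    rw [← hdpl, hpg]
    simp [derivative_mul, derivative_pow, derivative_sub, derivative_X, derivative_C,
      eval_mul, eval_add, eval_sub, eval_pow, sub_self]
  -- term rewrite
  have hterm : ∀ k ∈ Finset.univ.erase i,
      (lam.eval (r k) - lam.eval a) /
          ((derivative (derivative lam)).eval (r k) * (r k - a) ^ 2)
        = g.eval (r k) * Lagrange.nodalWeight Finset.univ r k / ((n : ℂ) + 1) := by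
    intro k hk
    have hki : r k - a ≠ 0 :=
      sub_ne_zero_of_ne fun h => (Finset.mem_erase.mp hk).1 (hinj h)
    have hP := hprod_ne k
    have h2 : (r k - a) ^ 2 ≠ 0 := pow_ne_zero 2 hki
    rw [hgk k hk, hdd k, hW k,
      mul_comm ((r k - a) ^ 2) (g.eval (r k)), mul_div_mul_right _ _ h2,
      ← div_eq_mul_inv, div_div, mul_comm (∏ j ∈ Finset.univ.erase k, (r k - r j)) ((n : ℂ) + 1)]
  rw [Finset.sum_congr rfl hterm]
  -- split off the i term from hsum1
  have hsplit := Finset.add_sum_erase Finset.univ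
    (fun k => g.eval (r k) * Lagrange.nodalWeight Finset.univ r k) (Finset.mem_univ i)
  rw [hsum1] at hsplit
  have hgaW : g.eval (r i) * Lagrange.nodalWeight Finset.univ r i = ((n : ℂ) + 1) / 2 := by
    have hP := hprod_ne i
    have h1 : ((n : ℂ) + 1) * ∏ j ∈ Finset.univ.erase i, (r i - r j) = 2 * g.eval (r i) := by
      rw [← hdd i]; exact hga
    have h2 : g.eval (r i) = ((n : ℂ) + 1) * (∏ j ∈ Finset.univ.erase i, (r i - r j)) / 2 := by
      linear_combination (-(1:ℂ)/2) * h1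
    rw [hW i, h2]
    field_simp
  have hsum2 : ∑ k ∈ Finset.univ.erase i,
      g.eval (r k) * Lagrange.nodalWeight Finset.univ r k = 1 - ((n : ℂ) + 1) / 2 := by
    linear_combination hsplit - hgaW
  rw [← Finset.sum_div, hsum2]
  field_simp
  ring
end

section
/- Let λ(q) be a monic complex polynomial of degree n+1 (n ≥ 1) whose critical points r_1, …, r_n are pairwise distinct and simple. Define c_i = (1/12)·( n/(n+1) + Σ_{k ≠ i} (λ(r_k) − λ(r_i)) / (λ″(r_k)(r_k − r_i)²) ). Then c_i = 1/24 for every i = 1, …, n. -/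
open Polynomial Finset

lemma lagrange_basis_coeff {n : ℕ} {v : Fin n → ℂ} (hv : Function.Injective v) (i : Fin n) :
    (Lagrange.basis Finset.univ v i).coeff (n - 1) =
      (∏ j ∈ Finset.univ.erase i, (v i - v j))⁻¹ := by
  have hvs : Set.InjOn v (Finset.univ : Finset (Fin n)) := hv.injOn
  have hdeg : (Lagrange.basis Finset.univ v i).degree =
      ((#(Finset.univ : Finset (Fin n)) - 1 : ℕ) : WithBot ℕ) :=
    Lagrange.degree_basis hvs (Finset.mem_univ i)
  have hcard : #(Finset.univ : Finset (Fin n)) = n := by simp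
  rw [hcard] at hdeg
  have hnd : (Lagrange.basis Finset.univ v i).natDegree = n - 1 :=
    natDegree_eq_of_degree_eq_some hdeg
  rw [← hnd, Polynomial.coeff_natDegree]
  rw [Lagrange.basis, Polynomial.leadingCoeff_prod, ← Finset.prod_inv_distrib]
  refine Finset.prod_congr rfl fun j hj => ?_
  have hij : v i ≠ v j := fun h => (Finset.mem_erase.mp hj).1 (hv h.symm)
  rw [Lagrange.basisDivisor, Polynomial.leadingCoeff_mul, Polynomial.leadingCoeff_C,
    (Polynomial.monic_X_sub_C (v j)).leadingCoeff, mul_one]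

lemma lagrange_sum {n : ℕ} {v : Fin n → ℂ} (hv : Function.Injective v)
    (f : Polynomial ℂ) (hf : f.degree < n) :
    ∑ k, f.eval (v k) * (∏ j ∈ Finset.univ.erase k, (v k - v j))⁻¹ = f.coeff (n - 1) := by
  have hvs : Set.InjOn v (Finset.univ : Finset (Fin n)) := hv.injOn
  have hcard : #(Finset.univ : Finset (Fin n)) = n := by simp
  have h := Lagrange.eq_interpolate (s := Finset.univ) hvs (by rw [hcard]; exact hf)
  conv_rhs => rw [h]
  rw [Lagrange.interpolate_apply, Polynomial.finset_sum_coeff]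
  refine (Finset.sum_congr rfl fun k _ => ?_).symm
  rw [Polynomial.coeff_C_mul, lagrange_basis_coeff hv]

/-- For a monic polynomial `λ` of degree `n+1` with pairwise distinct simple critical
points `r 1, …, r n`, the central invariants
`c_i = (1/12)·(n/(n+1) + Σ_{k ≠ i} (λ(r k) − λ(r i)) / (λ''(r k)(r k − r i)²))`
all equal `1/24`. -/
theorem an_central_invariants_eq (n : ℕ) (hn : 1 ≤ n) (lam : Polynomial ℂ)
    (hmonic : lam.Monic) (hdeg : lam.natDegree = n + 1)
    (r : Fin n → ℂ) (hinj : Function.Injective r)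
    (hroot : ∀ k, (derivative lam).eval (r k) = 0)
    (hsimple : ∀ k, (derivative (derivative lam)).eval (r k) ≠ 0)
    (i : Fin n) :
    (1 / 12 : ℂ) * ((n : ℂ) / ((n : ℂ) + 1) +
      ∑ k ∈ Finset.univ.erase i,
        (lam.eval (r k) - lam.eval (r i)) /
          ((derivative (derivative lam)).eval (r k) * (r k - r i) ^ 2))
      = 1 / 24 := by
  have hn1 : ((n : ℂ) + 1) ≠ 0 := by
    have := Nat.cast_add_one_ne_zero (R := ℂ) n
    simpa using this
  -- μ := lam - C (lam.eval (r i)) factors as (X - r i)^2 * ν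
  set c := r i with hc
  obtain ⟨ν, hν⟩ : ∃ ν, lam - C (lam.eval c) = (X - C c) ^ 2 * ν := by
    have h1 : (X - C c) ∣ (lam - C (lam.eval c)) := by
      rw [Polynomial.dvd_iff_isRoot]
      simp [Polynomial.IsRoot]
    obtain ⟨g, hg⟩ := h1
    have hg' : g.eval c = 0 := by
      have := congrArg (fun p => (derivative p).eval c) hg
      simp only [derivative_sub, derivative_C, derivative_mul, derivative_X, derivative_one,
        sub_zero, eval_add, eval_mul, eval_sub, eval_X, eval_C, sub_self, zero_mul,
        one_mul, mul_zero, add_zero, zero_add] at this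
      rw [hroot i] at this
      linear_combination -this
    have h2 : (X - C c) ∣ g := by
      rw [Polynomial.dvd_iff_isRoot]; exact hg'
    obtain ⟨ν, hν⟩ := h2
    exact ⟨ν, by rw [hg, hν]; ring⟩
  -- second derivative at r i equals 2 ν (r i)
  have hν2 : (derivative (derivative lam)).eval c = 2 * ν.eval c := by
    have h1 : derivative ((X - C c) ^ 2 * ν) = (X - C c) * (2 * ν + (X - C c) * derivative ν) := by
      rw [derivative_mul, derivative_pow]
      simp only [derivative_sub, derivative_X, derivative_C, sub_zero, mul_one,
        Polynomial.C_eq_natCast, Nat.cast_ofNat, map_ofNat]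
      ring
    have h2 := congrArg (fun p => (derivative (derivative p)).eval c) hν
    simp only [derivative_sub, derivative_C, sub_zero] at h2
    rw [h2, h1, derivative_mul]
    simp only [derivative_sub, derivative_X, derivative_C, sub_zero, one_mul,
      derivative_add, derivative_mul, eval_add, eval_mul, eval_sub, eval_X, eval_C,
      sub_self, zero_mul, mul_zero, add_zero, zero_add, Polynomial.eval_ofNat]
    try ring
  -- derivative lam = (n+1) ∏ (X - r k)
  have hcoeffd : (derivative lam).coeff n = (n : ℂ) + 1 := by
    rw [Polynomial.coeff_derivative]
    have : lam.coeff (n + 1) = 1 := by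
      have := hmonic.leadingCoeff
      rwa [Polynomial.leadingCoeff, hdeg] at this
    rw [this]; push_cast; ring
  have hdne : derivative lam ≠ 0 := by
    intro h
    rw [h, Polynomial.coeff_zero] at hcoeffd
    exact hn1 hcoeffd.symm
  have hndd : (derivative lam).natDegree = n := by
    refine le_antisymm ?_ (Polynomial.le_natDegree_of_ne_zero (by rw [hcoeffd]; exact hn1))
    simpa [hdeg] using Polynomial.natDegree_derivative_le lam
  have hprodmonic : (∏ k : Fin n, (X - C (r k))).Monic :=
    monic_prod_of_monic _ _ fun k _ => monic_X_sub_C (r k)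
  have hprodnd : (∏ k : Fin n, (X - C (r k))).natDegree = n := by
    rw [Polynomial.natDegree_prod _ _ (fun k _ => Polynomial.X_sub_C_ne_zero (r k))]
    simp
  have hlam' : derivative lam = C ((n : ℂ) + 1) * ∏ k : Fin n, (X - C (r k)) := by
    have hgne : C ((n : ℂ) + 1) * ∏ k : Fin n, (X - C (r k)) ≠ 0 :=
      mul_ne_zero (Polynomial.C_ne_zero.mpr hn1) hprodmonic.ne_zero
    have hgnd : (C ((n : ℂ) + 1) * ∏ k : Fin n, (X - C (r k))).natDegree = n := by
      rw [Polynomial.natDegree_C_mul hn1, hprodnd]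
    refine Polynomial.eq_of_degree_le_of_eval_index_eq (Finset.univ : Finset (Fin n))
      hinj.injOn ?_ ?_ ?_ ?_
    · rw [Polynomial.degree_eq_natDegree hdne, hndd]; simp
    · rw [Polynomial.degree_eq_natDegree hdne, Polynomial.degree_eq_natDegree hgne, hndd, hgnd]
    · rw [Polynomial.leadingCoeff, hndd, hcoeffd, Polynomial.leadingCoeff_mul,
        Polynomial.leadingCoeff_C, hprodmonic.leadingCoeff, mul_one]
    · intro k _
      rw [hroot k]
      rw [eval_mul, eval_prod]
      rw [Finset.prod_eq_zero (Finset.mem_univ k) (by simp)]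
      ring
  -- second derivative at r k
  have hlam'' : ∀ k : Fin n, (derivative (derivative lam)).eval (r k) =
      ((n : ℂ) + 1) * ∏ j ∈ Finset.univ.erase k, (r k - r j) := by
    intro k
    have hsplit := Finset.mul_prod_erase Finset.univ (fun j => X - C (r j)) (Finset.mem_univ k)
    rw [hlam', derivative_mul, derivative_C, zero_mul, zero_add, eval_mul, eval_C, ← hsplit,
      derivative_mul, derivative_sub, derivative_X, derivative_C, sub_zero, one_mul]
    simp only [eval_add, eval_mul, eval_sub, eval_X, eval_C, sub_self, zero_mul, mul_zero,
      add_zero, zero_add, eval_prod]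
  -- properties of ν
  have hμmonic : (lam - C (lam.eval c)).Monic := by
    have h2 : (lam - C (lam.eval c)).natDegree = n + 1 := by
      rw [Polynomial.natDegree_sub_C, hdeg]
    rw [Polynomial.Monic, Polynomial.leadingCoeff, h2, Polynomial.coeff_sub,
      Polynomial.coeff_C, if_neg (Nat.succ_ne_zero n), sub_zero]
    have := hmonic.leadingCoeff
    rwa [Polynomial.leadingCoeff, hdeg] at this
  have hνmonic : ν.Monic := by
    have := hμmonic.leadingCoeff
    rw [hν, Polynomial.leadingCoeff_mul, ((monic_X_sub_C c).pow 2).leadingCoeff, one_mul] at this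
    exact this
  have hνnd : ν.natDegree = n - 1 := by
    have h2 : (lam - C (lam.eval c)).natDegree = n + 1 := by
      rw [Polynomial.natDegree_sub_C, hdeg]
    rw [hν, Polynomial.natDegree_mul (((monic_X_sub_C c).pow 2).ne_zero) hνmonic.ne_zero] at h2
    have h3 : ((X - C c) ^ 2 : Polynomial ℂ).natDegree = 2 := by
      simp [Polynomial.natDegree_pow]
    omega
  have hνdeg : ν.degree < (n : WithBot ℕ) := by
    rw [Polynomial.degree_eq_natDegree hνmonic.ne_zero, hνnd]
    exact_mod_cast Nat.sub_lt (by omega) one_pos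
  have hνtop : ν.coeff (n - 1) = 1 := by
    rw [← hνnd]; exact hνmonic.coeff_natDegree
  -- the Lagrange sum
  have hsum := lagrange_sum hinj ν hνdeg
  rw [hνtop] at hsum
  -- nonvanishing of products
  have hw : ∀ k : Fin n, (∏ j ∈ Finset.univ.erase k, (r k - r j)) ≠ 0 := by
    intro k
    refine Finset.prod_ne_zero_iff.mpr fun j hj => sub_ne_zero_of_ne fun h => ?_
    exact (Finset.mem_erase.mp hj).1 (hinj h).symm
  -- evaluate each summand
  have hterm : ∀ k ∈ Finset.univ.erase i,
      (lam.eval (r k) - lam.eval (r i)) /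
        ((derivative (derivative lam)).eval (r k) * (r k - r i) ^ 2)
      = ((n : ℂ) + 1)⁻¹ * (ν.eval (r k) * (∏ j ∈ Finset.univ.erase k, (r k - r j))⁻¹) := by
    intro k hk
    have hki : k ≠ i := (Finset.mem_erase.mp hk).1
    have hrki : r k - r i ≠ 0 := sub_ne_zero_of_ne fun h => hki (hinj h)
    have hnum : lam.eval (r k) - lam.eval (r i) = (r k - r i) ^ 2 * ν.eval (r k) := by
      have := congrArg (fun p => Polynomial.eval (r k) p) hν
      simpa using this
    have hwk : (∏ j ∈ Finset.univ.erase k, (r k - r j)) ≠ 0 := hw k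
    rw [hnum, hlam'' k, div_eq_iff
      (mul_ne_zero (mul_ne_zero hn1 hwk) (pow_ne_zero 2 hrki))]
    field_simp
  rw [Finset.sum_congr rfl hterm, ← Finset.mul_sum]
  have hsplit : ∑ k ∈ Finset.univ.erase i,
      ν.eval (r k) * (∏ j ∈ Finset.univ.erase k, (r k - r j))⁻¹
      = 1 - ν.eval (r i) * (∏ j ∈ Finset.univ.erase i, (r i - r j))⁻¹ := by
    rw [← hsum, ← Finset.add_sum_erase _ _ (Finset.mem_univ i)]
    ring
  have hνi : ν.eval (r i) * (∏ j ∈ Finset.univ.erase i, (r i - r j))⁻¹ = ((n : ℂ) + 1) / 2 := by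
    have h1 : 2 * ν.eval c = ((n : ℂ) + 1) * ∏ j ∈ Finset.univ.erase i, (r i - r j) := by
      rw [← hν2, hlam'' i]
    have hwi := hw i
    field_simp
    linear_combination h1
  rw [hsplit, hνi]
  field_simp
  ring
end

section
/- Let R be a commutative ring with derivation ∂, and consider formal pseudodifferential operators A = Σ_{i ≤ m} a_i D^i, B = Σ_{j ≤ n} b_j D^j with coefficients in R, where D satisfies D∘a = aD + ∂(a). Define res(Σ f_i D^i) = f_{−1}. Then res(AB) − res(BA) lies in the image of ∂, i.e., is a total derivative. -/
/-- The generalized binomial coefficient `C(i,k)` for `i : ℤ`, `k : ℕ`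
(the division is exact: `k!` divides any product of `k` consecutive integers). -/
def intChoose (i : ℤ) (k : ℕ) : ℤ :=
  (∏ t ∈ Finset.range k, (i - (t : ℤ))) / (k.factorial : ℤ)

/-- The residue (coefficient of `D^{-1}`) of the product `AB` of two formal
pseudodifferential operators `A = Σ_{i ≤ mA} a_i D^i`, `B = Σ_{j ≤ mB} b_j D^j`,
computed via `D^i ∘ b = Σ_{k ≥ 0} C(i,k) ∂^k(b) D^{i−k}`: the terms contributing to
`D^{-1}` have `k = i + j + 1`. -/
noncomputable def pdoResMul {R : Type*} [CommRing R] (d : Derivation ℤ R R)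
    (a b : ℤ → R) (mA mB : ℤ) : R :=
  ∑ i ∈ Finset.Icc (-1 - mB) mA, ∑ j ∈ Finset.Icc (-1 - i) mB,
    a i * ((intChoose i (i + j + 1).toNat : ℤ) : R) * (⇑d)^[(i + j + 1).toNat] (b j)

open Finset

lemma descPoch_eval (i : ℤ) (k : ℕ) :
    (descPochhammer ℤ k).eval i = ∏ t ∈ Finset.range k, (i - (t : ℤ)) := by
  induction k with
  | zero => simp [descPochhammer_zero]
  | succ n ih =>
    rw [descPochhammer_succ_right, Finset.prod_range_succ, ← ih]
    simp [mul_comm]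

lemma fact_dvd_prod (i : ℤ) (k : ℕ) :
    (k.factorial : ℤ) ∣ ∏ t ∈ Finset.range k, (i - (t : ℤ)) := by
  rw [← descPoch_eval, Polynomial.eval_eq_smeval]
  rw [Ring.descPochhammer_eq_factorial_smul_choose]
  exact ⟨Ring.choose i k, by simp [nsmul_eq_mul]⟩

lemma intChoose_mul_fact (i : ℤ) (k : ℕ) :
    intChoose i k * (k.factorial : ℤ) = ∏ t ∈ Finset.range k, (i - (t : ℤ)) :=
  Int.ediv_mul_cancel (fact_dvd_prod i k)

lemma intChoose_reflect {i j : ℤ} {k : ℕ} (h : i + j + 1 = k) :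
    intChoose j k = (-1) ^ k * intChoose i k := by
  have hf : (0:ℤ) < (k.factorial : ℤ) := by exact_mod_cast k.factorial_pos
  apply mul_right_cancel₀ (ne_of_gt hf)
  rw [intChoose_mul_fact, mul_assoc, intChoose_mul_fact]
  have h1 : ∏ t ∈ Finset.range k, (j - (t:ℤ)) = ∏ t ∈ Finset.range k, ((t:ℤ) - i) := by
    rw [← Finset.prod_range_reflect (fun t => ((t:ℤ) - i)) k]
    apply Finset.prod_congr rfl
    intro t ht
    rw [Finset.mem_range] at ht
    have : ((k - 1 - t : ℕ) : ℤ) = (k:ℤ) - 1 - t := by omega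
    rw [this]; omega
  rw [h1]
  calc ∏ t ∈ Finset.range k, ((t:ℤ) - i)
      = ∏ t ∈ Finset.range k, (-1) * (i - (t:ℤ)) := by
        apply Finset.prod_congr rfl; intro t _; ring
    _ = (-1)^k * ∏ t ∈ Finset.range k, (i - (t:ℤ)) := by
        rw [Finset.prod_mul_distrib, Finset.prod_const, Finset.card_range]

lemma int_by_parts {R : Type*} [CommRing R] (d : Derivation ℤ R R) (k : ℕ) (x y : R) :
    ∃ g : R, x * (⇑d)^[k] y - (-1)^k * ((⇑d)^[k] x * y) = d g := by
  induction k generalizing x with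
  | zero => exact ⟨0, by simp⟩
  | succ n ih =>
    obtain ⟨g, hg⟩ := ih (d x)
    refine ⟨x * (⇑d)^[n] y - g, ?_⟩
    have h1 : (⇑d)^[n+1] y = d ((⇑d)^[n] y) := Function.iterate_succ_apply' d n y
    have h2 : (⇑d)^[n+1] x = (⇑d)^[n] (d x) := Function.iterate_succ_apply d n x
    rw [h1, h2, map_sub, Derivation.leibniz, smul_eq_mul, smul_eq_mul]
    linear_combination -hg

noncomputable def pdoSet (mA mB : ℤ) : Finset (ℤ × ℤ) :=
  (Finset.Icc (-1 - mB) mA ×ˢ Finset.Icc (-1 - mA) mB).filter (fun p => 0 ≤ p.1 + p.2 + 1)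

lemma pdoResMul_eq {R : Type*} [CommRing R] (d : Derivation ℤ R R)
    (a b : ℤ → R) (mA mB : ℤ) :
    pdoResMul d a b mA mB = ∑ p ∈ pdoSet mA mB,
      a p.1 * ((intChoose p.1 (p.1 + p.2 + 1).toNat : ℤ) : R) *
        (⇑d)^[(p.1 + p.2 + 1).toNat] (b p.2) := by
  rw [pdoResMul, pdoSet, Finset.sum_filter, Finset.sum_product]
  apply Finset.sum_congr rfl
  intro i hi
  rw [Finset.mem_Icc] at hi
  rw [← Finset.sum_filter]
  apply Finset.sum_congr ?_ (fun _ _ => rfl)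
  ext j
  simp only [Finset.mem_Icc, Finset.mem_filter]
  omega

lemma pdoResMul_swap {R : Type*} [CommRing R] (d : Derivation ℤ R R)
    (a b : ℤ → R) (mA mB : ℤ) :
    pdoResMul d b a mB mA = ∑ p ∈ pdoSet mA mB,
      b p.2 * ((intChoose p.2 (p.1 + p.2 + 1).toNat : ℤ) : R) *
        (⇑d)^[(p.1 + p.2 + 1).toNat] (a p.1) := by
  rw [pdoResMul_eq]
  apply Finset.sum_equiv (Equiv.prodComm ℤ ℤ)
  · intro p
    simp only [pdoSet, Finset.mem_filter, Finset.mem_product, Finset.mem_Icc,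
      Equiv.prodComm_apply, Prod.fst_swap, Prod.snd_swap]
    omega
  · intro p _
    simp only [Equiv.prodComm_apply, Prod.fst_swap, Prod.snd_swap]
    rw [show p.1 + p.2 + 1 = p.2 + p.1 + 1 by ring]


/-- For formal pseudodifferential operators over a commutative differential ring,
`res(AB) − res(BA)` is a total derivative, i.e. lies in the image of `∂`. -/
theorem residue_commutator_total_derivative {R : Type*} [CommRing R]
    (d : Derivation ℤ R R) (a b : ℤ → R) (mA mB : ℤ)
    (ha : ∀ i, mA < i → a i = 0) (hb : ∀ j, mB < j → b j = 0) :
    ∃ g : R, pdoResMul d a b mA mB - pdoResMul d b a mB mA = d g := by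
  rw [pdoResMul_eq, pdoResMul_swap, ← Finset.sum_sub_distrib]
  have key : ∀ p ∈ pdoSet mA mB, ∃ g : R,
      a p.1 * ((intChoose p.1 (p.1 + p.2 + 1).toNat : ℤ) : R) *
          (⇑d)^[(p.1 + p.2 + 1).toNat] (b p.2) -
        b p.2 * ((intChoose p.2 (p.1 + p.2 + 1).toNat : ℤ) : R) *
          (⇑d)^[(p.1 + p.2 + 1).toNat] (a p.1) = d g := by
    intro p hp
    have hp' : 0 ≤ p.1 + p.2 + 1 := (Finset.mem_filter.mp hp).2
    set k := (p.1 + p.2 + 1).toNat with hkdef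
    have hk : (k : ℤ) = p.1 + p.2 + 1 := Int.toNat_of_nonneg hp'
    have hrefl : intChoose p.2 k = (-1) ^ k * intChoose p.1 k :=
      intChoose_reflect hk.symm
    obtain ⟨g, hG⟩ := int_by_parts d k (a p.1) (b p.2)
    refine ⟨(intChoose p.1 k) • g, ?_⟩
    rw [Derivation.map_smul, zsmul_eq_mul, hrefl]
    push_cast
    linear_combination ((intChoose p.1 k : ℤ) : R) * hG
  choose! g hg using key
  refine ⟨∑ p ∈ pdoSet mA mB, g p, ?_⟩
  rw [map_sum]
  exact Finset.sum_congr rfl hg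
end
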